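/- For natural numbers n ≥ 1, m ≥ 1 and μ ≥ 0, one has the identity ∑_{k=1}^∞ (ζ(n+k) − 1)/(k+μ)^m = ∑_{k=2}^∞ k^{μ−n} ( Li_m(1/k) − ∑_{l=1}^μ (1/l^m)(1/k)^l ), where both series converge absolutely. -/

import Mathlib

set_option maxHeartbeats 1000000


/-- The Riemann zeta function at a natural argument, `ζ(s) = ∑_{n=1}^∞ 1/n^s`. -/
noncomputable def zetaNat (s : ℕ) : ℝ := ∑' n : ℕ, 1 / ((n : ℝ) + 1) ^ s

/-- The polylogarithm `Li_m(z) = ∑_{j=1}^∞ z^j/j^m`. -/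
noncomputable def polyLog (m : ℕ) (z : ℝ) : ℝ := ∑' j : ℕ, z ^ (j + 1) / ((j : ℝ) + 1) ^ m

lemma aux_summ1 {s : ℕ} (hs : 2 ≤ s) : Summable (fun i : ℕ => 1 / ((i : ℝ) + 1) ^ s) := by
  have h := Real.summable_one_div_nat_pow.mpr (by omega : 1 < s)
  have h2 := (summable_nat_add_iff 1).mpr h
  refine h2.congr fun i => ?_
  push_cast
  ring

lemma aux_summ2 {s : ℕ} (hs : 2 ≤ s) : Summable (fun j : ℕ => 1 / ((j : ℝ) + 2) ^ s) := by
  have h2 := (summable_nat_add_iff 1).mpr (aux_summ1 hs)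
  refine h2.congr fun j => ?_
  push_cast
  ring

lemma zetaNat_sub_one {s : ℕ} (hs : 2 ≤ s) :
    zetaNat s - 1 = ∑' j : ℕ, 1 / ((j : ℝ) + 2) ^ s := by
  have h := aux_summ1 hs
  rw [zetaNat, Summable.tsum_eq_zero_add h]
  have h0 : (1 : ℝ) / (((0 : ℕ) : ℝ) + 1) ^ s = 1 := by norm_num
  rw [h0]
  have htail : ∑' (b : ℕ), (1 : ℝ) / (((b + 1 : ℕ) : ℝ) + 1) ^ s
      = ∑' j : ℕ, 1 / ((j : ℝ) + 2) ^ s := by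
    refine tsum_congr fun b => ?_
    push_cast
    ring_nf
  rw [htail]
  ring

noncomputable def Faux (n m μ : ℕ) (p : ℕ × ℕ) : ℝ :=
  1 / ((p.2 : ℝ) + 2) ^ (n + p.1 + 1) * (1 / ((p.1 : ℝ) + 1 + μ) ^ m)

lemma Faux_nonneg (n m μ : ℕ) : 0 ≤ Faux n m μ := fun p => by
  unfold Faux; positivity

lemma summable_polyLog_terms (m : ℕ) {x : ℝ} (h0 : 0 ≤ x) (h1 : x < 1) :
    Summable (fun j : ℕ => x ^ (j + 1) / ((j : ℝ) + 1) ^ m) := by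
  refine Summable.of_nonneg_of_le (fun j => by positivity) (fun j => ?_)
    ((summable_geometric_of_lt_one h0 h1).mul_left x)
  calc x ^ (j + 1) / ((j : ℝ) + 1) ^ m ≤ x ^ (j + 1) := by
        apply div_le_self (by positivity)
        apply one_le_pow₀
        have : (0:ℝ) ≤ (j:ℝ) := Nat.cast_nonneg j
        linarith
    _ = x * x ^ j := by ring

theorem D_eq_polyLog_sum (n m μ : ℕ) (hn : 1 ≤ n) (hm : 1 ≤ m) :
    Summable (fun k : ℕ => (zetaNat (n + k + 1) - 1) / ((k : ℝ) + 1 + μ) ^ m) ∧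
    Summable (fun k : ℕ => ((k : ℝ) + 2) ^ ((μ : ℤ) - n) *
      (polyLog m (1 / ((k : ℝ) + 2)) -
        ∑ l ∈ Finset.Icc 1 μ, (1 / (l : ℝ) ^ m) * (1 / ((k : ℝ) + 2)) ^ l)) ∧
    (∑' k : ℕ, (zetaNat (n + k + 1) - 1) / ((k : ℝ) + 1 + μ) ^ m) =
      ∑' k : ℕ, ((k : ℝ) + 2) ^ ((μ : ℤ) - n) *
        (polyLog m (1 / ((k : ℝ) + 2)) -
          ∑ l ∈ Finset.Icc 1 μ, (1 / (l : ℝ) ^ m) * (1 / ((k : ℝ) + 2)) ^ l) := by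
  set F : ℕ × ℕ → ℝ := Faux n m μ with hFdef
  have hF0 : 0 ≤ F := Faux_nonneg n m μ
  have hFval : ∀ k j : ℕ, F (k, j) =
      1 / ((j : ℝ) + 2) ^ (n + k + 1) * (1 / ((k : ℝ) + 1 + μ) ^ m) := fun k j => rfl
  -- summability of the double series
  have hmaj : Summable (fun p : ℕ × ℕ => (1/2 : ℝ) ^ p.1 * (1 / ((p.2 : ℝ) + 2) ^ 2)) := by
    have h1 : Summable (fun k : ℕ => (1/2 : ℝ) ^ k) :=
      summable_geometric_of_lt_one (by norm_num) (by norm_num)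
    exact h1.mul_of_nonneg (aux_summ2 le_rfl) (fun k => by positivity) (fun j => by positivity)
  have hFs : Summable F := by
    refine Summable.of_nonneg_of_le (fun p => hF0 p) (fun p => ?_) hmaj
    obtain ⟨k, j⟩ := p
    rw [hFval]
    have hj0 : (0:ℝ) ≤ (j:ℝ) := Nat.cast_nonneg j
    have hk0 : (0:ℝ) ≤ (k:ℝ) := Nat.cast_nonneg k
    have hμ0 : (0:ℝ) ≤ (μ:ℝ) := Nat.cast_nonneg μ
    have ha0 : (0:ℝ) < (j:ℝ) + 2 := by linarith
    have hxa : (0:ℝ) < 1 / ((j:ℝ) + 2) := by positivity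
    have hxa1 : 1 / ((j:ℝ) + 2) ≤ 1/2 := by
      apply one_div_le_one_div_of_le <;> linarith
    calc 1 / ((j : ℝ) + 2) ^ (n + k + 1) * (1 / ((k : ℝ) + 1 + μ) ^ m)
        ≤ 1 / ((j : ℝ) + 2) ^ (n + k + 1) * 1 := by
          gcongr
          apply div_le_one_of_le₀ _ (by positivity)
          apply one_le_pow₀
          linarith
      _ = (1 / ((j : ℝ) + 2)) ^ (n + k + 1) := by rw [mul_one, one_div_pow]
      _ ≤ (1 / ((j : ℝ) + 2)) ^ (k + 2) := by
          apply pow_le_pow_of_le_one hxa.le (by linarith) (by omega)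
      _ = (1 / ((j : ℝ) + 2)) ^ k * (1 / ((j : ℝ) + 2)) ^ 2 := by rw [← pow_add]
      _ ≤ (1/2 : ℝ) ^ k * (1 / ((j : ℝ) + 2)) ^ 2 :=
          mul_le_mul_of_nonneg_right (pow_le_pow_left₀ hxa.le hxa1 k) (by positivity)
      _ = (1/2 : ℝ) ^ k * (1 / ((j : ℝ) + 2) ^ 2) := by
          congr 1
          exact one_div_pow _ _
  -- row / column summability
  have hcol : ∀ k : ℕ, Summable fun j : ℕ => F (k, j) := fun k => hFs.prod_factor k
  have hrow : ∀ j : ℕ, Summable fun k : ℕ => F (k, j) := fun j => hFs.prod_symm.prod_factor j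
  -- identity (A): row sums give the zeta-side terms
  have hA : ∀ k : ℕ, (zetaNat (n + k + 1) - 1) / ((k : ℝ) + 1 + μ) ^ m = ∑' j : ℕ, F (k, j) := by
    intro k
    rw [zetaNat_sub_one (by omega : 2 ≤ n + k + 1), ← tsum_div_const]
    exact tsum_congr fun j => by rw [hFval, mul_one_div]
  -- identity (B): column sums give the polylog-side terms
  have hB : ∀ j : ℕ, ∑' k : ℕ, F (k, j) =
      ((j : ℝ) + 2) ^ ((μ : ℤ) - n) *
        (polyLog m (1 / ((j : ℝ) + 2)) -
          ∑ l ∈ Finset.Icc 1 μ, (1 / (l : ℝ) ^ m) * (1 / ((j : ℝ) + 2)) ^ l) := by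
    intro j
    have hj0 : (0:ℝ) ≤ (j:ℝ) := Nat.cast_nonneg j
    have ha0 : (0:ℝ) < (j:ℝ) + 2 := by linarith
    have hx0 : (0:ℝ) < 1 / ((j:ℝ) + 2) := by positivity
    have hx1 : 1 / ((j:ℝ) + 2) < 1 := by
      rw [div_lt_one ha0]; linarith
    have hf : Summable (fun i : ℕ => (1 / ((j:ℝ) + 2)) ^ (i + 1) / ((i : ℝ) + 1) ^ m) :=
      summable_polyLog_terms m hx0.le hx1
    have hsplit := hf.sum_add_tsum_nat_add μ
    have hIcc : ∑ l ∈ Finset.Icc 1 μ, (1 / (l : ℝ) ^ m) * (1 / ((j : ℝ) + 2)) ^ l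
        = ∑ i ∈ Finset.range μ, (1 / ((j:ℝ) + 2)) ^ (i + 1) / ((i : ℝ) + 1) ^ m := by
      rw [← Finset.Ico_add_one_right_eq_Icc, Finset.sum_Ico_eq_sum_range]
      simp only [Nat.add_sub_cancel]
      refine Finset.sum_congr rfl fun i _ => ?_
      push_cast
      rw [add_comm 1 (i:ℝ), add_comm 1 i]
      ring
    have hpoly : polyLog m (1 / ((j : ℝ) + 2)) -
        ∑ l ∈ Finset.Icc 1 μ, (1 / (l : ℝ) ^ m) * (1 / ((j : ℝ) + 2)) ^ l
        = ∑' i : ℕ, (1 / ((j:ℝ) + 2)) ^ (i + μ + 1) / (((i + μ : ℕ) : ℝ) + 1) ^ m := by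
      rw [hIcc, polyLog, ← hsplit]
      ring
    rw [hpoly, ← tsum_mul_left]
    refine tsum_congr fun i => ?_
    rw [hFval]
    have hi0 : (0:ℝ) ≤ (i:ℝ) := Nat.cast_nonneg i
    have hμ0 : (0:ℝ) ≤ (μ:ℝ) := Nat.cast_nonneg μ
    have hb0 : ((i:ℝ) + 1 + μ) ≠ 0 := by positivity
    have hb0' : ((i:ℝ) + μ + 1) ≠ 0 := by positivity
    rw [zpow_sub₀ ha0.ne', zpow_natCast, zpow_natCast]
    push_cast
    have ha1 : ((j:ℝ) + 2) ≠ 0 := ha0.ne'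
    field_simp
    rw [one_div_pow]
    field_simp
    ring
  -- assemble
  have hsum1 : Summable (fun k : ℕ => (zetaNat (n + k + 1) - 1) / ((k : ℝ) + 1 + μ) ^ m) := by
    have := ((summable_prod_of_nonneg hF0).mp hFs).2
    exact this.congr fun k => (hA k).symm
  have hsum2 : Summable (fun k : ℕ => ((k : ℝ) + 2) ^ ((μ : ℤ) - n) *
      (polyLog m (1 / ((k : ℝ) + 2)) -
        ∑ l ∈ Finset.Icc 1 μ, (1 / (l : ℝ) ^ m) * (1 / ((k : ℝ) + 2)) ^ l)) := by
    have hswap : Summable (fun p : ℕ × ℕ => F p.swap) := hFs.prod_symm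
    have := ((summable_prod_of_nonneg (fun p => hF0 p.swap)).mp hswap).2
    exact this.congr fun j => hB j
  refine ⟨hsum1, hsum2, ?_⟩
  calc ∑' k : ℕ, (zetaNat (n + k + 1) - 1) / ((k : ℝ) + 1 + μ) ^ m
      = ∑' k : ℕ, ∑' j : ℕ, F (k, j) := tsum_congr hA
    _ = ∑' j : ℕ, ∑' k : ℕ, F (k, j) :=
        (Summable.tsum_comm' (f := fun k j => F (k, j)) hFs hcol hrow).symm
    _ = _ := tsum_congr hB
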